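/- Let S be the set of all nontrivial identities over alphabets of at most four variables that are satisfied by the hypoplactic monoid hypo, excluding the identity (R) xzytxy ≈ xzytyx and all identities equivalent to it. Then (R) is not a consequence of S; semantically, there exists a monoid that satisfies every identity in S but does not satisfy (R). -/

import Mathlib

open FreeMonoid

/-- The alphabet `A = {1 < 2 < 3 < ...}` of positive integers. -/
abbrev Alph : Type := ℕ+

/-- The finite alphabet `A_n = {1 < ... < n}`. -/
abbrev AlphN (n : ℕ) : Type := {a : ℕ+ // (a : ℕ) ≤ n}

/-- The defining relations of the hypoplactic monoid. -/
def HypoRel (u v : FreeMonoid Alph) : Prop :=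
  (∃ a b c : Alph, a ≤ b ∧ b < c ∧
      u = of a * of c * of b ∧ v = of c * of a * of b) ∨
  (∃ a b c : Alph, a < b ∧ b ≤ c ∧
      u = of b * of a * of c ∧ v = of b * of c * of a) ∨
  (∃ a b c d : Alph, a ≤ b ∧ b < c ∧ c ≤ d ∧
      u = of c * of a * of d * of b ∧ v = of a * of c * of b * of d) ∨
  (∃ a b c d : Alph, a < b ∧ b ≤ c ∧ c < d ∧
      u = of b * of d * of a * of c ∧ v = of d * of b * of c * of a)

/-- The hypoplactic congruence on `A*`: the congruence generated by `HypoRel`. -/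
def hypoCon : Con (FreeMonoid Alph) := conGen HypoRel

/-- The infinite-rank hypoplactic monoid `hypo`. -/
abbrev Hypo : Type := hypoCon.Quotient

/-- The inclusion of `A_n*` into `A*`. -/
def inclN (n : ℕ) : FreeMonoid (AlphN n) →* FreeMonoid Alph :=
  FreeMonoid.map Subtype.val

/-- The hypoplactic congruence restricted to `A_n*`. -/
def hypoConN (n : ℕ) : Con (FreeMonoid (AlphN n)) :=
  hypoCon.comap (inclN n) (fun x y => map_mul (inclN n) x y)

/-- The rank-`n` hypoplactic monoid `hypo_n`. -/
abbrev HypoN (n : ℕ) : Type := (hypoConN n).Quotient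

/-- The letter `1` of `A_2`. -/
def a1 : AlphN 2 := ⟨1, by norm_num⟩

/-- The letter `2` of `A_2`. -/
def a2 : AlphN 2 := ⟨2, by norm_num⟩

/-- The homomorphism `φ_{ij} : A* → hypo_2`, sending `i ↦ [1]`, `j ↦ [2]`,
`a ↦ [21]` for `i < a < j`, and every other letter to the identity. -/
def phi (i j : Alph) : FreeMonoid Alph →* HypoN 2 :=
  FreeMonoid.lift fun a =>
    if a = i then (hypoConN 2).mk' (of a1)
    else if a = j then (hypoConN 2).mk' (of a2)
    else if i < a ∧ a < j then (hypoConN 2).mk' (of a2 * of a1)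
    else 1

/-- A monoid `M` satisfies the identity `u ≈ v` (over the alphabet of variables `X`)
if every homomorphic evaluation of the two words in `M` gives equal values. -/
def MSatisfies (M : Type*) [Monoid M] {X : Type*} (u v : FreeMonoid X) : Prop :=
  ∀ ψ : FreeMonoid X →* M, ψ u = ψ v

/-- An identity `u ≈ v` is balanced if every variable occurs the same number of
times in `u` as in `v`. -/
def IsBalanced {X : Type*} [DecidableEq X] (u v : FreeMonoid X) : Prop :=
  ∀ x : X, u.toList.count x = v.toList.count x

/-- The left side of identity (L): `xyzxty` (variables `x = 0`, `y = 1`, `z = 2`, `t = 3`). -/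
def wL1 : FreeMonoid (Fin 4) := of 0 * of 1 * of 2 * of 0 * of 3 * of 1
/-- The right side of identity (L): `yxzxty`. -/
def wL2 : FreeMonoid (Fin 4) := of 1 * of 0 * of 2 * of 0 * of 3 * of 1
/-- The left side of identity (M): `xzxytx`. -/
def wM1 : FreeMonoid (Fin 4) := of 0 * of 2 * of 0 * of 1 * of 3 * of 0
/-- The right side of identity (M): `xzyxtx`. -/
def wM2 : FreeMonoid (Fin 4) := of 0 * of 2 * of 1 * of 0 * of 3 * of 0
/-- The left side of identity (R): `xzytxy`. -/
def wR1 : FreeMonoid (Fin 4) := of 0 * of 2 * of 1 * of 3 * of 0 * of 1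
/-- The right side of identity (R): `xzytyx`. -/
def wR2 : FreeMonoid (Fin 4) := of 0 * of 2 * of 1 * of 3 * of 1 * of 0

/-- Two identities (over the same alphabet of variables) are equivalent if one is
obtained from the other by renaming variables via a bijection of the variables
and/or swapping the two sides. -/
def EquivIdent {X : Type*} (p q : FreeMonoid X × FreeMonoid X) : Prop :=
  ∃ σ : X ≃ X,
    (FreeMonoid.map σ p.1 = q.1 ∧ FreeMonoid.map σ p.2 = q.2) ∨
    (FreeMonoid.map σ p.1 = q.2 ∧ FreeMonoid.map σ p.2 = q.1)

structure Bm where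
  q : Bool
  p : Bool
  f : Bool
deriving DecidableEq

instance : Monoid Bm where
  mul x y := ⟨x.q || y.q, x.p || y.p, x.f || y.f || (x.q && y.p)⟩
  one := ⟨false, false, false⟩
  mul_assoc := by
    rintro ⟨a,b,c⟩ ⟨d,e,f⟩ ⟨g,h,i⟩
    cases a <;> cases b <;> cases c <;> cases d <;> cases e <;> cases f <;>
      cases g <;> cases h <;> cases i <;> rfl
  one_mul := by rintro ⟨a,b,c⟩; cases a <;> cases b <;> cases c <;> rfl
  mul_one := by rintro ⟨a,b,c⟩; cases a <;> cases b <;> cases c <;> rfl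

@[simp] lemma Bm.mul_def (x y : Bm) :
    x * y = ⟨x.q || y.q, x.p || y.p, x.f || y.f || (x.q && y.p)⟩ := rfl
@[simp] lemma Bm.one_def : (1 : Bm) = ⟨false, false, false⟩ := rfl

def vn : ℕ → Bm := fun n => if n = 1 then ⟨false, true, false⟩ else
  if n = 2 then ⟨true, false, false⟩ else ⟨false, false, false⟩

lemma vn_s1 (a b c : ℕ) (h1 : a ≤ b) (h2 : b < c) :
    vn a * vn c * vn b = vn c * vn a * vn b := by
  unfold vn; split_ifs <;> first | rfl | omega
lemma vn_s2 (a b c : ℕ) (h1 : a < b) (h2 : b ≤ c) :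
    vn b * vn a * vn c = vn b * vn c * vn a := by
  unfold vn; split_ifs <;> first | rfl | omega
lemma vn_s3 (a b c d : ℕ) (h1 : a ≤ b) (h2 : b < c) (h3 : c ≤ d) :
    vn c * vn a * vn d * vn b = vn a * vn c * vn b * vn d := by
  unfold vn; split_ifs <;> first | rfl | omega
lemma vn_s4 (a b c d : ℕ) (h1 : a < b) (h2 : b ≤ c) (h3 : c < d) :
    vn b * vn d * vn a * vn c = vn d * vn b * vn c * vn a := by
  unfold vn; split_ifs <;> first | rfl | omega

-- ### the invariant homomorphisms on Hypo
def chi0 : FreeMonoid Alph →* Bm := FreeMonoid.lift (fun a => vn (a : ℕ))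

lemma chi0_ker : hypoCon ≤ Con.ker chi0 := by
  apply Con.conGen_le.2
  rintro u v (⟨a,b,c,h1,h2,rfl,rfl⟩ | ⟨a,b,c,h1,h2,rfl,rfl⟩ |
    ⟨a,b,c,d,h1,h2,h3,rfl,rfl⟩ | ⟨a,b,c,d,h1,h2,h3,rfl,rfl⟩) <;>
    rw [Con.ker_rel] <;> simp only [map_mul, chi0, FreeMonoid.lift_eval_of]
  · exact vn_s1 _ _ _ ((PNat.coe_le_coe _ _).2 h1) ((PNat.coe_lt_coe _ _).2 h2)
  · exact vn_s2 _ _ _ ((PNat.coe_lt_coe _ _).2 h1) ((PNat.coe_le_coe _ _).2 h2)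
  · exact vn_s3 _ _ _ _ ((PNat.coe_le_coe _ _).2 h1) ((PNat.coe_lt_coe _ _).2 h2) ((PNat.coe_le_coe _ _).2 h3)
  · exact vn_s4 _ _ _ _ ((PNat.coe_lt_coe _ _).2 h1) ((PNat.coe_le_coe _ _).2 h2) ((PNat.coe_lt_coe _ _).2 h3)

def cnt1 : FreeMonoid Alph →* Multiplicative ℕ :=
  FreeMonoid.lift (fun a => Multiplicative.ofAdd (if (a : ℕ) = 1 then 1 else 0))

lemma cnt1_ker : hypoCon ≤ Con.ker cnt1 := by
  apply Con.conGen_le.2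
  rintro u v (⟨a,b,c,h1,h2,rfl,rfl⟩ | ⟨a,b,c,h1,h2,rfl,rfl⟩ |
    ⟨a,b,c,d,h1,h2,h3,rfl,rfl⟩ | ⟨a,b,c,d,h1,h2,h3,rfl,rfl⟩) <;>
    rw [Con.ker_rel] <;> simp only [map_mul] <;> ac_rfl

def chiH : Hypo →* Bm := hypoCon.lift chi0 chi0_ker
def cntH : Hypo →* Multiplicative ℕ := hypoCon.lift cnt1 cnt1_ker

@[simp] lemma chiH_mk (w : FreeMonoid Alph) : chiH (hypoCon.mk' w) = chi0 w :=
  Con.lift_mk' _ _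
@[simp] lemma cntH_mk (w : FreeMonoid Alph) : cntH (hypoCon.mk' w) = cnt1 w :=
  Con.lift_mk' _ _
@[simp] lemma chiH_coe (w : FreeMonoid Alph) : chiH (w : Hypo) = chi0 w :=
  Con.lift_coe _ _
@[simp] lemma cntH_coe (w : FreeMonoid Alph) : cntH (w : Hypo) = cnt1 w :=
  Con.lift_coe _ _

-- ### substitutions into Hypo
def psiST (s t : Fin 4) : FreeMonoid (Fin 4) →* Hypo :=
  FreeMonoid.lift (fun x => if x = s then hypoCon.mk' (of (2 : ℕ+))
    else if x = t then hypoCon.mk' (of (1 : ℕ+)) else 1)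

def psiC (x : Fin 4) : FreeMonoid (Fin 4) →* Hypo :=
  FreeMonoid.lift (fun y => if y = x then hypoCon.mk' (of (1 : ℕ+)) else 1)

-- ### combinatorial invariants of words over Fin 4
def boB : List (Fin 4) → Fin 4 → Fin 4 → Bool
  | [], _, _ => false
  | a :: l, s, t => (decide (a = s) && decide (t ∈ l)) || boB l s t

lemma gst_char (s t : Fin 4) (hst : s ≠ t) (l : List (Fin 4)) :
    (l.map (fun x => if x = s then (⟨true,false,false⟩ : Bm)
      else if x = t then ⟨false,true,false⟩ else 1)).prod
      = ⟨decide (s ∈ l), decide (t ∈ l), boB l s t⟩ := by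
  induction l with
  | nil => rfl
  | cons a l ih =>
    rw [List.map_cons, List.prod_cons, ih]
    by_cases h1 : a = s
    · subst h1
      simp [boB, hst, Ne.symm hst, List.mem_cons, Bool.or_comm]
    · by_cases h2 : a = t
      · subst h2
        simp [boB, h1, List.mem_cons, Ne.symm h1]
      · simp [boB, h1, h2, List.mem_cons, Ne.symm h1, Ne.symm h2]

lemma cnt_char (x : Fin 4) (l : List (Fin 4)) :
    (l.map (fun y => Multiplicative.ofAdd (if y = x then 1 else 0))).prod
      = Multiplicative.ofAdd (l.count x) := by
  induction l with
  | nil => rfl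
  | cons a l ih =>
    rw [List.map_cons, List.prod_cons, ih, List.count_cons]
    by_cases h : a = x <;> simp [h, ← ofAdd_add] <;> ring_nf

lemma bo_diag (l : List (Fin 4)) (s : Fin 4) :
    boB l s s = decide (2 ≤ l.count s) := by
  induction l with
  | nil => simp [boB]
  | cons a l ih =>
    rw [boB, ih, Bool.eq_iff_iff]
    have hmc : s ∈ l ↔ 0 < l.count s := List.count_pos_iff.symm
    simp only [Bool.or_eq_true, Bool.and_eq_true, decide_eq_true_eq, List.count_cons, hmc]
    by_cases h : a = s
    · subst h
      simp only [eq_self_iff_true, true_and, beq_self_eq_true, if_true]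
      omega
    · rw [if_neg (by simpa using h)]
      simp only [h, false_and, false_or]
      omega

lemma bo_append (l m : List (Fin 4)) (s t : Fin 4) :
    boB (l ++ m) s t = (boB l s t || boB m s t || (decide (s ∈ l) && decide (t ∈ m))) := by
  induction l with
  | nil => simp [boB]
  | cons a l ih =>
    rw [List.cons_append, boB, ih, boB]
    rw [Bool.eq_iff_iff]
    simp only [Bool.or_eq_true, Bool.and_eq_true, decide_eq_true_eq, List.mem_append,
      List.mem_cons]
    tauto

-- ### necessity of the invariants for identities of Hypo
theorem hypo_nec {u v : FreeMonoid (Fin 4)} (h : MSatisfies Hypo u v) :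
    (∀ x, u.toList.count x = v.toList.count x) ∧
    (∀ s t, boB u.toList s t = boB v.toList s t) := by
  have hcnt : ∀ x, u.toList.count x = v.toList.count x := by
    intro x
    have h1 := congrArg cntH (h (psiC x))
    have key : ∀ w : FreeMonoid (Fin 4), cntH (psiC x w) =
        Multiplicative.ofAdd (w.toList.count x) := by
      intro w
      have : cntH.comp (psiC x) =
          FreeMonoid.lift (fun y => Multiplicative.ofAdd (if y = x then 1 else 0)) := by
        apply FreeMonoid.hom_eq
        intro y
        simp only [MonoidHom.comp_apply, psiC, FreeMonoid.lift_eval_of]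
        by_cases hy : y = x <;>
          simp [hy, cnt1, FreeMonoid.lift_eval_of, show ((1:ℕ+):ℕ) = 1 from rfl]
      have h2 := DFunLike.congr_fun this w
      simp only [MonoidHom.comp_apply] at h2
      rw [h2, FreeMonoid.lift_apply, cnt_char]
    rw [key, key] at h1
    exact Multiplicative.ofAdd.injective h1
  refine ⟨hcnt, fun s t => ?_⟩
  by_cases hst : s = t
  · subst hst
    rw [bo_diag, bo_diag, hcnt]
  · have h1 := congrArg chiH (h (psiST s t))
    have key : ∀ w : FreeMonoid (Fin 4), chiH (psiST s t w) =
        ⟨decide (s ∈ w.toList), decide (t ∈ w.toList), boB w.toList s t⟩ := by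
      intro w
      have heq : chiH.comp (psiST s t) =
          FreeMonoid.lift (fun x => if x = s then (⟨true,false,false⟩ : Bm)
            else if x = t then ⟨false,true,false⟩ else 1) := by
        apply FreeMonoid.hom_eq
        intro y
        simp only [MonoidHom.comp_apply, psiST, FreeMonoid.lift_eval_of]
        have hts : t ≠ s := fun hh => hst hh.symm
        by_cases hy : y = s
        · simp [hy, chi0, FreeMonoid.lift_eval_of, vn, show ((2:ℕ+):ℕ) = 2 from rfl]
        · by_cases hy2 : y = t <;>
            simp [hy, hy2, hts, chi0, FreeMonoid.lift_eval_of, vn,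
              show ((1:ℕ+):ℕ) = 1 from rfl]
      have h2 := DFunLike.congr_fun heq w
      simp only [MonoidHom.comp_apply] at h2
      rw [h2, FreeMonoid.lift_apply, gst_char s t hst]
    rw [key, key] at h1
    exact congrArg Bm.f h1

def W1L : List (Fin 4) := [0,2,1,3,0,1]
def W2L : List (Fin 4) := [0,2,1,3,1,0]

lemma length_eq_sum (l : List (Fin 4)) :
    l.length = l.count 0 + l.count 1 + l.count 2 + l.count 3 := by
  induction l with
  | nil => rfl
  | cons a l ih =>
    fin_cases a <;> simp [List.count_cons, ih] <;> omega

lemma exists_len : ∀ (n : ℕ) (l : List (Fin 4)), l.length = n →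
    ∃ m : List (Fin 4), l = m ∧ m.length = n := fun n l h => ⟨l, rfl, h⟩

set_option maxHeartbeats 1000000 in
lemma classKey6 : ∀ a b c d e f : Fin 4,
    (∀ x, List.count x [a,b,c,d,e,f] = List.count x W1L) →
    (∀ s t, boB [a,b,c,d,e,f] s t = boB W1L s t) →
    [a,b,c,d,e,f] = W1L ∨ [a,b,c,d,e,f] = W2L := by decide

lemma exists6 (l : List (Fin 4)) (h : l.length = 6) :
    ∃ a b c d e f : Fin 4, l = [a,b,c,d,e,f] := by
  match l, h with
  | [a,b,c,d,e,f], _ => exact ⟨a,b,c,d,e,f,rfl⟩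

/-- words with the invariants of wR1 are wR1 or wR2. -/
lemma classKey (l : List (Fin 4)) (hc : ∀ x, l.count x = List.count x W1L)
    (hb : ∀ s t, boB l s t = boB W1L s t) : l = W1L ∨ l = W2L := by
  have hlen : l.length = 6 := by
    rw [length_eq_sum]
    rw [hc 0, hc 1, hc 2, hc 3]; rfl
  obtain ⟨a,b,c,d,e,f,rfl⟩ := exists6 l hlen
  exact classKey6 a b c d e f hc hb

def Plist1 : List (List (Fin 4)) := [[0],[1]]
def Plist2 : List (List (Fin 4)) := [[0,2],[0,1],[1,0]]
def Plist3 : List (List (Fin 4)) := [[0,2,1],[3,0,1],[3,1,0]]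
def Plist4 : List (List (Fin 4)) := [[0,2,1,3],[1,3,0,1],[1,3,1,0]]
def Plist5 : List (List (Fin 4)) := [[0,2,1,3,0],[0,2,1,3,1],[2,1,3,0,1],[2,1,3,1,0]]

lemma core1 : ∀ P ∈ Plist1, ∀ a : Fin 4, (∀ x, List.count x [a] = List.count x P) →
    (∀ s t, boB [a] s t = boB P s t) → [a] = P := by decide
lemma core2 : ∀ P ∈ Plist2, ∀ a b : Fin 4, (∀ x, List.count x [a,b] = List.count x P) →
    (∀ s t, boB [a,b] s t = boB P s t) → [a,b] = P := by decide
lemma core3 : ∀ P ∈ Plist3, ∀ a b c : Fin 4, (∀ x, List.count x [a,b,c] = List.count x P) →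
    (∀ s t, boB [a,b,c] s t = boB P s t) → [a,b,c] = P := by decide
set_option maxHeartbeats 800000 in
lemma core4 : ∀ P ∈ Plist4, ∀ a b c d : Fin 4, (∀ x, List.count x [a,b,c,d] = List.count x P) →
    (∀ s t, boB [a,b,c,d] s t = boB P s t) → [a,b,c,d] = P := by decide
set_option maxHeartbeats 3000000 in
lemma core5 : ∀ P ∈ Plist5, ∀ a b c d e : Fin 4, (∀ x, List.count x [a,b,c,d,e] = List.count x P) →
    (∀ s t, boB [a,b,c,d,e] s t = boB P s t) → [a,b,c,d,e] = P := by decide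

def PlistAll : List (List (Fin 4)) := Plist1 ++ Plist2 ++ Plist3 ++ Plist4 ++ Plist5

lemma uniqKey (P l : List (Fin 4)) (hP : P ∈ PlistAll)
    (hc : ∀ x, l.count x = List.count x P)
    (hb : ∀ s t, boB l s t = boB P s t) : l = P := by
  have hlen : l.length = P.length := by
    rw [length_eq_sum l, length_eq_sum P, hc 0, hc 1, hc 2, hc 3]
  have hPl : P.length = 1 ∧ P ∈ Plist1 ∨ P.length = 2 ∧ P ∈ Plist2 ∨
      P.length = 3 ∧ P ∈ Plist3 ∨ P.length = 4 ∧ P ∈ Plist4 ∨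
      P.length = 5 ∧ P ∈ Plist5 := by
    revert hP
    have : ∀ P ∈ PlistAll, P.length = 1 ∧ P ∈ Plist1 ∨ P.length = 2 ∧ P ∈ Plist2 ∨
      P.length = 3 ∧ P ∈ Plist3 ∨ P.length = 4 ∧ P ∈ Plist4 ∨
      P.length = 5 ∧ P ∈ Plist5 := by decide
    exact this P
  rcases hPl with ⟨h, hm⟩ | ⟨h, hm⟩ | ⟨h, hm⟩ | ⟨h, hm⟩ | ⟨h, hm⟩ <;> rw [h] at hlen
  · match l, hlen with
    | [a], _ => exact core1 P hm a hc hb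
  · match l, hlen with
    | [a,b], _ => exact core2 P hm a b hc hb
  · match l, hlen with
    | [a,b,c], _ => exact core3 P hm a b c hc hb
  · match l, hlen with
    | [a,b,c,d], _ => exact core4 P hm a b c d hc hb
  · match l, hlen with
    | [a,b,c,d,e], _ => exact core5 P hm a b c d e hc hb

abbrev Dcmp := List (Fin 4 × List (Fin 4))

/-- group consecutive equal labels, pairing with letters -/
def grp : List (Fin 4) → List (Fin 4) → Dcmp
  | x :: ls, a :: as =>
    match grp ls as with
    | (y, b) :: rest => if x = y then (x, a :: b) :: rest else (x, [a]) :: (y, b) :: rest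
    | [] => [(x, [a])]
  | _, _ => []

def lkp (d : Dcmp) (x : Fin 4) : List (Fin 4) :=
  ((d.find? (fun p => p.1 == x)).map Prod.snd).getD []

def consB (d : Dcmp) : Bool := d.all (fun p => lkp d p.1 == p.2)

def q2rec (d : Dcmp) : ℕ → List (Fin 4) → List (List (Fin 4))
  | 0, _ => []
  | _ + 1, [] => [[]]
  | fuel + 1, t :: ts =>
    (List.finRange 4).flatMap fun x =>
      let b := lkp d x
      if b ≠ [] ∧ b = (t :: ts).take b.length then
        (q2rec d fuel ((t :: ts).drop b.length)).map (x :: ·)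
      else []

def shapeB : List (Fin 4) → List (Fin 4) → Bool
  | [a,b,c,d,a',c'], [a2,b2,c2,d2,c3,a3] =>
    a' == a && c' == c && a2 == a && b2 == b && c2 == c && d2 == d && c3 == c && a3 == a &&
    a != b && a != c && a != d && b != c && b != d && c != d
  | _, _ => false

def checkMain (ls : List (Fin 4)) : Bool :=
  let d := grp ls W1L
  !(consB d) ||
  (let q1 := d.map Prod.fst
   (q2rec d 7 W2L).all fun q2 =>
     !((List.finRange 4).all fun x => q1.count x == q2.count x) ||
     !((List.finRange 4).all fun s => (List.finRange 4).all fun t =>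
         (!(decide (s ∈ q1) && decide (t ∈ q1))) || (boB q1 s t == boB q2 s t)) ||
     shapeB q1 q2)

set_option maxRecDepth 100000 in
set_option maxHeartbeats 4000000 in
lemma mainKey : ∀ a b c d e f : Fin 4, checkMain [a,b,c,d,e,f] = true := by decide

-- ### helper lemmas about grp
lemma grp_cons_eq (x : Fin 4) (ls : List (Fin 4)) (a : Fin 4) (as : List (Fin 4)) :
    grp (x :: ls) (a :: as) = (match grp ls as with
      | (y, b) :: rest => if x = y then (x, a :: b) :: rest else (x, [a]) :: (y, b) :: rest
      | [] => [(x, [a])]) := rfl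

lemma grp_cons (x : Fin 4) (ls : List (Fin 4)) (a : Fin 4) (as : List (Fin 4)) :
    ∃ b rest, grp (x :: ls) (a :: as) = (x, b) :: rest := by
  rcases h : grp ls as with _ | ⟨⟨y, bb⟩, rest⟩
  · exact ⟨[a], [], by simp [grp, h]⟩
  · by_cases hxy : x = y
    · exact ⟨a :: bb, rest, by simp [grp, h, hxy]⟩
    · exact ⟨[a], (y, bb) :: rest, by simp [grp, h, hxy]⟩

lemma grp_rep (x : Fin 4) : ∀ (b : List (Fin 4)), b ≠ [] → ∀ (A B : List (Fin 4)),
    (∀ y, A.head? = some y → y ≠ x) →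
    grp (List.replicate b.length x ++ A) (b ++ B) = (x, b) :: grp A B := by
  intro b
  induction b with
  | nil => exact fun hb => absurd rfl hb
  | cons a b ih =>
    intro _ A B hA
    by_cases hbe : b = []
    · subst hbe
      cases A with
      | nil => cases B with
        | nil => simp [grp]
        | cons c B' => simp [grp]
      | cons y A' =>
        have hyx : y ≠ x := hA y rfl
        cases B with
        | nil => simp [grp]
        | cons cB B' =>
          obtain ⟨bb, rest, hgr⟩ := grp_cons y A' cB B'
          have hxy : x ≠ y := Ne.symm hyx
          show grp (x :: y :: A') (a :: cB :: B') = (x, [a]) :: grp (y :: A') (cB :: B')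
          rw [grp_cons_eq x (y :: A') a (cB :: B'), hgr]
          simp [hxy]
    · have hrep : List.replicate (a :: b).length x = x :: List.replicate b.length x := rfl
      rw [hrep]
      have ih' := ih hbe A B hA
      show grp (x :: (List.replicate b.length x ++ A)) (a :: (b ++ B)) = (x, a :: b) :: grp A B
      rw [grp_cons_eq x (List.replicate b.length x ++ A) a (b ++ B), ih']
      simp

lemma grp_spec (w : Fin 4 → List (Fin 4)) : ∀ (q : List (Fin 4)),
    q.Chain' (· ≠ ·) → (∀ x ∈ q, w x ≠ []) →
    grp (q.flatMap fun x => List.replicate (w x).length x) (q.flatMap w)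
      = q.map fun x => (x, w x) := by
  intro q
  induction q with
  | nil => intro _ _; rfl
  | cons x q ih =>
    intro hch hw
    rw [List.flatMap_cons, List.flatMap_cons, List.map_cons]
    rw [grp_rep x (w x) (hw x (by simp)) _ _ ?hA]
    · rw [ih (List.isChain_cons.1 hch).2 (fun y hy => hw y (by simp [hy]))]
    case hA =>
      intro y hy
      cases q with
      | nil => simp at hy
      | cons z q' =>
        have hz : w z ≠ [] := hw z (by simp)
        rw [List.flatMap_cons] at hy
        have h2 : ((List.replicate (w z).length z) ++
            (q'.flatMap fun x => List.replicate (w x).length x)).head? = some z := by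
          cases hwz : w z with
          | nil => exact absurd hwz hz
          | cons c cs => simp [hwz, List.replicate_succ]
        rw [h2] at hy
        obtain rfl : y = z := by simpa using hy.symm
        have hxz : x ≠ y := (List.isChain_cons.1 hch).1 y rfl
        exact fun h => hxz h.symm

lemma lkp_spec (w : Fin 4 → List (Fin 4)) : ∀ (q : List (Fin 4)) (x : Fin 4), x ∈ q →
    lkp (q.map fun y => (y, w y)) x = w x := by
  intro q
  induction q with
  | nil => intro x hx; simp at hx
  | cons y q ih =>
    intro x hx
    by_cases hxy : y = x
    · subst hxy
      simp [lkp, List.find?_cons_of_pos]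
    · rw [List.map_cons, lkp, List.find?_cons_of_neg (by simpa using hxy)]
      have : x ∈ q := by
        rcases List.mem_cons.1 hx with h | h
        · exact absurd h.symm hxy
        · exact h
      exact ih x this

lemma consB_spec (w : Fin 4 → List (Fin 4)) (q : List (Fin 4)) :
    consB (q.map fun y => (y, w y)) = true := by
  rw [consB, List.all_eq_true]
  intro p hp
  rw [List.mem_map] at hp
  obtain ⟨y, hy, rfl⟩ := hp
  simp [lkp_spec w q y hy]

lemma q2rec_comp (d : Dcmp) (w : Fin 4 → List (Fin 4)) : ∀ (q : List (Fin 4)) (fuel : ℕ)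
    (target : List (Fin 4)), q.length < fuel →
    (∀ x ∈ q, lkp d x = w x ∧ w x ≠ []) →
    q.flatMap w = target → q ∈ q2rec d fuel target := by
  intro q
  induction q with
  | nil =>
    intro fuel target hf _ hflat
    match fuel with
    | f + 1 =>
      simp only [List.flatMap_nil] at hflat
      subst hflat
      simp [q2rec]
  | cons x q ih =>
    intro fuel target hf hx hflat
    match fuel with
    | f + 1 =>
      obtain ⟨hl, hnil⟩ := hx x (by simp)
      rw [List.flatMap_cons] at hflat
      match hwx : w x with
      | [] => exact absurd hwx hnil
      | c :: cs =>
        rw [hwx] at hflat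
        subst hflat
        rw [List.cons_append]
        rw [show q2rec d (f+1) (c :: (cs ++ q.flatMap w)) = (List.finRange 4).flatMap
          (fun x => let b := lkp d x
            if b ≠ [] ∧ b = (c :: (cs ++ q.flatMap w)).take b.length then
              (q2rec d f ((c :: (cs ++ q.flatMap w)).drop b.length)).map (x :: ·)
            else []) from rfl]
        rw [List.mem_flatMap]
        refine ⟨x, List.mem_finRange x, ?_⟩
        rw [hl, hwx]
        rw [if_pos ⟨by simp, by rw [show c :: (cs ++ q.flatMap w) = (c :: cs) ++ q.flatMap w from rfl, List.take_left]⟩]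
        rw [List.mem_map]
        refine ⟨q, ?_, rfl⟩
        have hdrop : (c :: (cs ++ q.flatMap w)).drop (c :: cs).length = q.flatMap w := by
          rw [show c :: (cs ++ q.flatMap w) = (c :: cs) ++ q.flatMap w from rfl, List.drop_left]
        rw [hdrop]
        exact ih f (q.flatMap w) (Nat.lt_of_succ_lt_succ hf)
          (fun y hy => hx y (by simp [hy])) rfl

-- ### square-freeness of W1L and the adjacency chain condition
lemma nosq_core : ∀ n k : Fin 7, 1 ≤ (k : ℕ) → (n : ℕ) + (k : ℕ) + (k : ℕ) ≤ 6 →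
    ¬ (((W1L.drop n).take k : List (Fin 4)) = ((W1L.drop n).drop k).take k) := by decide

lemma nosquare (p b s : List (Fin 4)) (h : p ++ (b ++ (b ++ s)) = W1L) : b = [] := by
  by_contra hb
  have hlen : p.length + (b.length + (b.length + s.length)) = 6 := by
    have := congrArg List.length h
    simpa [W1L] using this
  have h1 : W1L.drop p.length = b ++ (b ++ s) := by rw [← h, List.drop_left]
  have h2 : (W1L.drop p.length).take b.length = b := by rw [h1, List.take_left]
  have h3 : ((W1L.drop p.length).drop b.length).take b.length = b := by
    rw [h1, List.drop_left, List.take_left]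
  have hk : 1 ≤ b.length := by
    rcases b with _ | ⟨c, b⟩
    · exact absurd rfl hb
    · simp
  exact nosq_core ⟨p.length, by omega⟩ ⟨b.length, by omega⟩ (by simpa) (by simp; omega)
    (by rw [h2, h3])

lemma noadj (w : Fin 4 → List (Fin 4)) : ∀ (q pre : List (Fin 4)),
    (pre.flatMap w) ++ (q.flatMap w) = W1L → (∀ x ∈ q, w x ≠ []) →
    q.Chain' (· ≠ ·) := by
  intro q
  induction q with
  | nil => intro _ _ _; exact List.isChain_nil
  | cons x q ih =>
    intro pre hflat hw
    apply List.isChain_cons.2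
    constructor
    · intro y hy heq
      cases q with
      | nil => simp at hy
      | cons z q' =>
        obtain rfl : z = y := by simpa using hy
        rw [List.flatMap_cons, List.flatMap_cons, ← heq] at hflat
        exact hw x (by simp) (nosquare _ _ _ (by simpa [List.append_assoc] using hflat))
    · refine ih (pre ++ [x]) ?_ (fun y hy => hw y (by simp [hy]))
      rw [List.flatMap_append] at *
      rw [List.flatMap_cons] at hflat
      simpa [List.append_assoc] using hflat

-- ### filter lemmas
lemma flatMap_filter (w : Fin 4 → List (Fin 4)) : ∀ (l : List (Fin 4)),
    (l.filter (fun x => !(w x).isEmpty)).flatMap w = l.flatMap w := by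
  intro l
  induction l with
  | nil => rfl
  | cons a l ih =>
    by_cases h : (w a).isEmpty
    · rw [List.filter_cons_of_neg (by simp [h]), List.flatMap_cons, ih,
        List.isEmpty_iff.1 h]
      rfl
    · rw [List.filter_cons_of_pos (by simp [h]), List.flatMap_cons, List.flatMap_cons, ih]

lemma boB_filter (pr : Fin 4 → Bool) (s t : Fin 4) (hs : pr s = true) (ht : pr t = true) :
    ∀ (l : List (Fin 4)), boB (l.filter pr) s t = boB l s t := by
  intro l
  induction l with
  | nil => rfl
  | cons a l ih =>
    by_cases h : pr a = true
    · rw [List.filter_cons_of_pos h, boB, boB, ih]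
      have : decide (t ∈ l.filter pr) = decide (t ∈ l) := by
        simp [List.mem_filter, ht]
      rw [this]
    · rw [List.filter_cons_of_neg (by simpa using h), boB, ih]
      have : a ≠ s := fun hh => h (hh ▸ hs)
      simp [this]

lemma count_filter_eq (pr : Fin 4 → Bool) (x : Fin 4) (l : List (Fin 4)) :
    (l.filter pr).count x = if pr x then l.count x else 0 := by
  by_cases h : pr x = true
  · rw [if_pos h, List.count_filter h]
  · rw [if_neg h, List.count_eq_zero]
    intro hm
    exact h (List.mem_filter.1 hm).2

lemma len_le_flat (w : Fin 4 → List (Fin 4)) : ∀ (q : List (Fin 4)),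
    (∀ x ∈ q, w x ≠ []) → q.length ≤ (q.flatMap w).length := by
  intro q
  induction q with
  | nil => simp
  | cons x q ih =>
    intro hw
    rw [List.flatMap_cons, List.length_append, List.length_cons]
    have h1 : 1 ≤ (w x).length := by
      rcases hwx : w x with _ | ⟨c, cs⟩
      · exact absurd hwx (hw x (by simp))
      · simp
    have := ih (fun y hy => hw y (by simp [hy]))
    omega

lemma flat_rep_len (w : Fin 4 → List (Fin 4)) : ∀ (q : List (Fin 4)),
    (q.flatMap fun x => List.replicate (w x).length x).length = (q.flatMap w).length := by
  intro q
  induction q with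
  | nil => rfl
  | cons x q ih => simp [List.flatMap_cons, ih]

lemma map_fst_pair (w : Fin 4 → List (Fin 4)) (q : List (Fin 4)) :
    (q.map fun x => (x, w x)).map Prod.fst = q := by
  induction q with
  | nil => rfl
  | cons a q ih => simp only [List.map_cons, ih]

lemma allfour : ∀ a b c d : Fin 4, a≠b → a≠c → a≠d → b≠c → b≠d → c≠d →
    ∀ x : Fin 4, x = a ∨ x = b ∨ x = c ∨ x = d := by decide

lemma exists6' (l : List (Fin 4)) (h : l.length = 6) :
    ∃ a b c d e f : Fin 4, l = [a,b,c,d,e,f] := by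
  match l, h with
  | [a,b,c,d,e,f], _ => exact ⟨a,b,c,d,e,f,rfl⟩

lemma shapeB_spec (q1 q2 : List (Fin 4)) (h : shapeB q1 q2 = true) :
    ∃ a b c d : Fin 4, (a≠b ∧ a≠c ∧ a≠d ∧ b≠c ∧ b≠d ∧ c≠d) ∧
      q1 = [a,b,c,d,a,c] ∧ q2 = [a,b,c,d,c,a] := by
  unfold shapeB at h
  split at h
  case h_1 a b c d a' c' a2 b2 c2 d2 c3 a3 =>
    simp only [Bool.and_eq_true, beq_iff_eq, bne_iff_ne, ne_eq] at h
    obtain ⟨h, hcd⟩ := h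
    obtain ⟨h, hbd⟩ := h
    obtain ⟨h, hbc⟩ := h
    obtain ⟨h, had⟩ := h
    obtain ⟨h, hac⟩ := h
    obtain ⟨h, hab⟩ := h
    obtain ⟨h, ha3⟩ := h
    obtain ⟨h, hc3⟩ := h
    obtain ⟨h, hd2⟩ := h
    obtain ⟨h, hc2⟩ := h
    obtain ⟨h, hb2⟩ := h
    obtain ⟨h, ha2⟩ := h
    obtain ⟨ha', hc'⟩ := h
    subst ha' hc' ha3 hc3 hd2 hc2 hb2 ha2
    exact ⟨_, _, _, _, ⟨hab, hac, had, hbc, hbd, hcd⟩, rfl, rfl⟩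
  case h_2 => simp at h

theorem star_core (L1 L2 : List (Fin 4)) (w : Fin 4 → List (Fin 4))
    (hc : ∀ x, List.count x L1 = List.count x L2)
    (hb : ∀ s t, boB L1 s t = boB L2 s t)
    (h1 : L1.flatMap w = W1L) (h2 : L2.flatMap w = W2L) :
    ∃ a b c d : Fin 4, (a≠b ∧ a≠c ∧ a≠d ∧ b≠c ∧ b≠d ∧ c≠d) ∧
      L1 = [a,b,c,d,a,c] ∧ L2 = [a,b,c,d,c,a] := by
  set pr : Fin 4 → Bool := fun x => !(w x).isEmpty with hpr
  have hprw : ∀ x, pr x = true ↔ w x ≠ [] := by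
    intro x; simp [hpr, List.isEmpty_iff]
  set q1 := L1.filter pr with hq1
  set q2 := L2.filter pr with hq2
  have hq1f : q1.flatMap w = W1L := by rw [hq1, flatMap_filter, h1]
  have hq2f : q2.flatMap w = W2L := by rw [hq2, flatMap_filter, h2]
  have hq1w : ∀ x ∈ q1, w x ≠ [] := fun x hx => (hprw x).1 (List.mem_filter.1 hx).2
  have hq2w : ∀ x ∈ q2, w x ≠ [] := fun x hx => (hprw x).1 (List.mem_filter.1 hx).2
  have hcnt : ∀ x, List.count x q1 = List.count x q2 := by
    intro x
    rw [hq1, hq2, count_filter_eq, count_filter_eq, hc x]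
  have hch : q1.Chain' (· ≠ ·) := noadj w q1 [] (by simpa using hq1f) hq1w
  have hd1 : grp (q1.flatMap fun x => List.replicate (w x).length x) (q1.flatMap w)
      = q1.map fun x => (x, w x) := grp_spec w q1 hch hq1w
  have hlab : (q1.flatMap fun x => List.replicate (w x).length x).length = 6 := by
    rw [flat_rep_len, hq1f]; rfl
  obtain ⟨m1,m2,m3,m4,m5,m6,hm⟩ := exists6' _ hlab
  have hmk := mainKey m1 m2 m3 m4 m5 m6
  rw [← hm] at hmk
  unfold checkMain at hmk
  rw [← hq1f, hd1] at hmk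
  simp only [consB_spec, map_fst_pair, Bool.not_true, Bool.false_or] at hmk
  rw [List.all_eq_true] at hmk
  have hq2len : q2.length < 7 := by
    have hle := len_le_flat w q2 hq2w
    rw [hq2f] at hle
    have : q2.length ≤ 6 := by simpa [W2L] using hle
    omega
  have hq2q1 : ∀ x ∈ q2, x ∈ q1 := by
    intro x hx
    have hpos : 0 < List.count x q2 := List.count_pos_iff.2 hx
    rw [← hcnt] at hpos
    exact List.count_pos_iff.1 hpos
  have hmem := q2rec_comp (q1.map fun x => (x, w x)) w q2 7 W2L hq2len
    (fun x hx => ⟨lkp_spec w q1 x (hq2q1 x hx), hq2w x hx⟩) hq2f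
  have hf := hmk q2 hmem
  have hA : ((List.finRange 4).all fun x => List.count x q1 == List.count x q2) = true := by
    rw [List.all_eq_true]; intro x _; exact beq_iff_eq.2 (hcnt x)
  have hB : ((List.finRange 4).all fun s => (List.finRange 4).all fun t =>
      (!(decide (s ∈ q1) && decide (t ∈ q1))) || (boB q1 s t == boB q2 s t)) = true := by
    rw [List.all_eq_true]; intro s _
    rw [List.all_eq_true]; intro t _
    by_cases hs : s ∈ q1
    · by_cases ht : t ∈ q1
      · have hbo : boB q1 s t = boB q2 s t := by
          rw [hq1, hq2, boB_filter pr s t ((hprw s).2 (hq1w s hs)) ((hprw t).2 (hq1w t ht)),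
            boB_filter pr s t ((hprw s).2 (hq1w s hs)) ((hprw t).2 (hq1w t ht))]
          exact hb s t
        simp [hbo]
      · simp [ht]
    · simp [hs]
  rw [hA, hB] at hf
  have hshape : shapeB q1 q2 = true := by simpa using hf
  obtain ⟨a,b,c,d, hne, hq1s, hq2s⟩ := shapeB_spec _ _ hshape
  obtain ⟨hab,hac,had,hbc,hbd,hcd⟩ := hne
  have hmemq1 : ∀ y ∈ ([a,b,c,d,a,c] : List (Fin 4)), pr y = true := by
    intro y hy
    rw [← hq1s] at hy
    exact (List.mem_filter.1 hy).2
  have hvis : ∀ x : Fin 4, pr x = true := by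
    intro x
    rcases allfour a b c d hab hac had hbc hbd hcd x with rfl|rfl|rfl|rfl
    · exact hmemq1 _ (by simp)
    · exact hmemq1 _ (by simp)
    · exact hmemq1 _ (by simp)
    · exact hmemq1 _ (by simp)
  have hL1 : L1 = q1 := by
    rw [hq1]
    exact (List.filter_eq_self.2 (fun x _ => hvis x)).symm
  have hL2 : L2 = q2 := by
    rw [hq2]
    exact (List.filter_eq_self.2 (fun x _ => hvis x)).symm
  exact ⟨a,b,c,d, ⟨hab,hac,had,hbc,hbd,hcd⟩, by rw [hL1, hq1s], by rw [hL2, hq2s]⟩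

-- ### FreeMonoid-level glue
lemma toList_wR1 : FreeMonoid.toList wR1 = W1L := rfl
lemma toList_wR2 : FreeMonoid.toList wR2 = W2L := rfl

lemma hom_flat (σ : FreeMonoid (Fin 4) →* FreeMonoid (Fin 4)) :
    ∀ l : List (Fin 4), FreeMonoid.toList (σ (FreeMonoid.ofList l)) =
      l.flatMap (fun x => (σ (FreeMonoid.of x)).toList) := by
  intro l
  induction l with
  | nil =>
    show FreeMonoid.toList (σ 1) = []
    rw [map_one, FreeMonoid.toList_one]
  | cons a l ih =>
    show FreeMonoid.toList (σ (FreeMonoid.of a * FreeMonoid.ofList l)) = _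
    rw [map_mul, FreeMonoid.toList_mul, ih, List.flatMap_cons]

lemma inj4 : ∀ a b c d u v : Fin 4, a≠b → a≠c → a≠d → b≠c → b≠d → c≠d →
    (if u = a then (0 : Fin 4) else if u = b then 2 else if u = c then 1 else 3) =
    (if v = a then (0 : Fin 4) else if v = b then 2 else if v = c then 1 else 3) →
    u = v := by decide

lemma starFM (p1 p2 : FreeMonoid (Fin 4)) (hsat : MSatisfies Hypo p1 p2)
    (σ : FreeMonoid (Fin 4) →* FreeMonoid (Fin 4))
    (h1 : σ p1 = wR1) (h2 : σ p2 = wR2) : EquivIdent (p1, p2) (wR1, wR2) := by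
  obtain ⟨hcc, hbb⟩ := hypo_nec hsat
  set w : Fin 4 → List (Fin 4) := fun x => (σ (FreeMonoid.of x)).toList with hw
  have hf1 : p1.toList.flatMap w = W1L := by
    have h := congrArg FreeMonoid.toList h1
    rw [show FreeMonoid.toList (σ p1) = p1.toList.flatMap w from hom_flat σ p1.toList] at h
    exact h
  have hf2 : p2.toList.flatMap w = W2L := by
    have h := congrArg FreeMonoid.toList h2
    rw [show FreeMonoid.toList (σ p2) = p2.toList.flatMap w from hom_flat σ p2.toList] at h
    exact h
  obtain ⟨a,b,c,d, ⟨hab,hac,had,hbc,hbd,hcd⟩, hL1, hL2⟩ :=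
    star_core p1.toList p2.toList w hcc hbb hf1 hf2
  set g : Fin 4 → Fin 4 :=
    fun v => if v = a then 0 else if v = b then 2 else if v = c then 1 else 3 with hg
  have hinj : Function.Injective g :=
    fun u v h => inj4 a b c d u v hab hac had hbc hbd hcd h
  have hbij := Finite.injective_iff_bijective.1 hinj
  have hcoe : ⇑(Equiv.ofBijective g hbij) = g := rfl
  refine ⟨Equiv.ofBijective g hbij, Or.inl ⟨?_, ?_⟩⟩
  · apply FreeMonoid.toList.injective
    rw [FreeMonoid.toList_map, hcoe, hL1, toList_wR1]
    simp [hg, Ne.symm hab, Ne.symm hac, Ne.symm had, Ne.symm hbc, Ne.symm hbd, Ne.symm hcd]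
    rfl
  · apply FreeMonoid.toList.injective
    rw [FreeMonoid.toList_map, hcoe, hL2, toList_wR2]
    simp [hg, Ne.symm hab, Ne.symm hac, Ne.symm had, Ne.symm hbc, Ne.symm hbd, Ne.symm hcd]
    rfl

lemma starFM' (p1 p2 : FreeMonoid (Fin 4)) (hsat : MSatisfies Hypo p1 p2)
    (σ : FreeMonoid (Fin 4) →* FreeMonoid (Fin 4))
    (h1 : σ p1 = wR2) (h2 : σ p2 = wR1) : EquivIdent (p1, p2) (wR1, wR2) := by
  have hs : MSatisfies Hypo p2 p1 := fun θ => (hsat θ).symm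
  obtain ⟨τ, h | h⟩ := starFM p2 p1 hs σ h2 h1
  · exact ⟨τ, Or.inr ⟨h.2, h.1⟩⟩
  · exact ⟨τ, Or.inl ⟨h.2, h.1⟩⟩

-- ### invariants of W2L agree with those of W1L
lemma cntW : ∀ x, List.count x W2L = List.count x W1L := by decide
lemma boW : ∀ s t, boB W2L s t = boB W1L s t := by decide

lemma classKey2 (l : List (Fin 4)) (hc : ∀ x, l.count x = List.count x W2L)
    (hb : ∀ s t, boB l s t = boB W2L s t) : l = W1L ∨ l = W2L :=
  classKey l (fun x => (hc x).trans (cntW x)) (fun s t => (hb s t).trans (boW s t))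

-- ### the syntactic congruence defining the witness monoid
def rK (a b : FreeMonoid (Fin 4)) : Prop :=
  (∀ x, List.count x a.toList = List.count x b.toList) ∧
  (∀ s t, boB a.toList s t = boB b.toList s t) ∧
  (a = wR1 ↔ b = wR1) ∧ (a = wR2 ↔ b = wR2)

lemma rK.symm' {a b : FreeMonoid (Fin 4)} (h : rK a b) : rK b a :=
  ⟨fun x => (h.1 x).symm, fun s t => (h.2.1 s t).symm, (h.2.2.1).symm, (h.2.2.2).symm⟩

lemma mid (b d : FreeMonoid (Fin 4)) (W : FreeMonoid (Fin 4)) (P S : List (Fin 4))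
    (hP : P ∈ PlistAll) (hS : S ∈ PlistAll)
    (hbP : ∀ x, List.count x b.toList = List.count x P)
    (hbP2 : ∀ s t, boB b.toList s t = boB P s t)
    (hdS : ∀ x, List.count x d.toList = List.count x S)
    (hdS2 : ∀ s t, boB d.toList s t = boB S s t)
    (hPS : P ++ S = W.toList) : b * d = W := by
  have hbL : b.toList = P := uniqKey P b.toList hP hbP hbP2
  have hdL : d.toList = S := uniqKey S d.toList hS hdS hdS2
  apply FreeMonoid.toList.injective
  rw [FreeMonoid.toList_mul, hbL, hdL, hPS]

lemma empty_of_counts (b : FreeMonoid (Fin 4)) (h : ∀ x, List.count x b.toList = 0) :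
    b = 1 := by
  apply FreeMonoid.toList.injective
  rw [FreeMonoid.toList_one]
  have : b.toList.length = 0 := by
    rw [length_eq_sum, h 0, h 1, h 2, h 3]
  exact List.length_eq_zero_iff.1 this

lemma splitW (W : FreeMonoid (Fin 4)) (WL : List (Fin 4)) (hWL : W.toList = WL)
    (hW6 : WL.length = 6)
    (hpre : ∀ n, 1 ≤ n → n ≤ 5 → WL.take n ∈ PlistAll ∧ WL.drop n ∈ PlistAll)
    {a c b d : FreeMonoid (Fin 4)} (hab : rK a b) (hcd : rK c d)
    (hWc : W = wR1 ∨ W = wR2) (h : a * c = W) : b * d = W := by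
  have hsplit : a.toList ++ c.toList = WL := by
    rw [← hWL, ← FreeMonoid.toList_mul, h]
  have hlen : a.toList.length + c.toList.length = 6 := by
    have := congrArg List.length hsplit
    simpa [hW6] using this
  obtain ⟨n, hndef⟩ : ∃ n, n = a.toList.length := ⟨_, rfl⟩
  have hTake : a.toList = WL.take n := by rw [← hsplit, hndef, List.take_left]
  have hDrop : c.toList = WL.drop n := by rw [← hsplit, hndef, List.drop_left]
  have hlen' : n + c.toList.length = 6 := by rw [hndef]; exact hlen
  rcases Nat.eq_zero_or_pos n with h0 | h1
  · -- a is empty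
    have hb1 : b = 1 := empty_of_counts b (fun x => by
      rw [← hab.1 x]
      have : a.toList = [] := List.length_eq_zero_iff.1 (by rw [← hndef, h0])
      rw [this]; rfl)
    have hc : c = W := by
      apply FreeMonoid.toList.injective
      rw [hDrop, h0, List.drop_zero, hWL]
    have hd : d = W := by
      rcases hWc with rfl | rfl
      · exact (hcd.2.2.1).1 hc
      · exact (hcd.2.2.2).1 hc
    rw [hb1, hd, one_mul]
  · rcases Nat.lt_or_ge n 6 with h6 | h6
    · -- 1 ≤ n ≤ 5
      have hn5 : n ≤ 5 := by omega
      obtain ⟨hP, hS⟩ := hpre n h1 hn5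
      refine mid b d W _ _ hP hS ?_ ?_ ?_ ?_ ?_
      · intro x; rw [← hab.1 x, hTake]
      · intro s t; rw [← hab.2.1 s t, hTake]
      · intro x; rw [← hcd.1 x, hDrop]
      · intro s t; rw [← hcd.2.1 s t, hDrop]
      · rw [List.take_append_drop, hWL]
    · -- n = 6 : c empty
      have h6' : n = 6 := by omega
      have ha : a = W := by
        rw [h6'] at hTake
        rw [List.take_of_length_le (le_of_eq hW6)] at hTake
        exact FreeMonoid.toList.injective (hTake.trans hWL.symm)
      have hb : b = W := by
        rcases hWc with rfl | rfl
        · exact (hab.2.2.1).1 ha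
        · exact (hab.2.2.2).1 ha
      have hd1 : d = 1 := empty_of_counts d (fun x => by
        rw [← hcd.1 x]
        have hc0 : c.toList.length = 0 := by omega
        rw [List.length_eq_zero_iff.1 hc0]; rfl)
      rw [hb, hd1, mul_one]

lemma pre1 : ∀ n, 1 ≤ n → n ≤ 5 → W1L.take n ∈ PlistAll ∧ W1L.drop n ∈ PlistAll := by decide
lemma pre2 : ∀ n, 1 ≤ n → n ≤ 5 → W2L.take n ∈ PlistAll ∧ W2L.drop n ∈ PlistAll := by decide

def conK : Con (FreeMonoid (Fin 4)) where
  r := rK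
  iseqv := ⟨fun _ => ⟨fun _ => rfl, fun _ _ => rfl, Iff.rfl, Iff.rfl⟩,
    rK.symm',
    fun h1 h2 => ⟨fun x => (h1.1 x).trans (h2.1 x),
      fun s t => (h1.2.1 s t).trans (h2.2.1 s t),
      (h1.2.2.1).trans (h2.2.2.1), (h1.2.2.2).trans (h2.2.2.2)⟩⟩
  mul' := by
    intro p q r s h1 h2
    refine ⟨?_, ?_, ?_, ?_⟩
    · intro x
      rw [FreeMonoid.toList_mul, FreeMonoid.toList_mul, List.count_append,
        List.count_append, h1.1 x, h2.1 x]
    · intro u t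
      rw [FreeMonoid.toList_mul, FreeMonoid.toList_mul, bo_append, bo_append,
        h1.2.1 u t, h2.2.1 u t]
      have hu : decide (u ∈ p.toList) = decide (u ∈ q.toList) := by
        simp only [decide_eq_decide]
        rw [← List.count_pos_iff, ← List.count_pos_iff, h1.1 u]
      have ht : decide (t ∈ r.toList) = decide (t ∈ s.toList) := by
        simp only [decide_eq_decide]
        rw [← List.count_pos_iff, ← List.count_pos_iff, h2.1 t]
      rw [hu, ht]
    · constructor
      · exact fun h => splitW wR1 W1L rfl rfl pre1 h1 h2 (Or.inl rfl) h
      · exact fun h => splitW wR1 W1L rfl rfl pre1 h1.symm' h2.symm' (Or.inl rfl) h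
    · constructor
      · exact fun h => splitW wR2 W2L rfl rfl pre2 h1 h2 (Or.inr rfl) h
      · exact fun h => splitW wR2 W2L rfl rfl pre2 h1.symm' h2.symm' (Or.inr rfl) h

/-- The identity (R) `xzytxy ≈ xzytyx` is not a consequence of the set `S` of all
nontrivial identities in at most four variables satisfied by `hypo`, excluding (R)
itself and identities equivalent to it: there is a monoid satisfying every identity
in `S` but not satisfying (R). -/
theorem idR_not_consequence :
    ∃ (M : Type) (instM : Monoid M),
      (∀ p : FreeMonoid (Fin 4) × FreeMonoid (Fin 4),
        p.1 ≠ p.2 → MSatisfies Hypo p.1 p.2 → ¬ EquivIdent p (wR1, wR2) →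
          @MSatisfies M instM _ p.1 p.2) ∧
      ¬ @MSatisfies M instM _ wR1 wR2 := by
  have ofL1 : ∀ u : FreeMonoid (Fin 4), u.toList = W1L → u = wR1 :=
    fun u h => FreeMonoid.toList.injective h
  have ofL2 : ∀ u : FreeMonoid (Fin 4), u.toList = W2L → u = wR2 :=
    fun u h => FreeMonoid.toList.injective h
  refine ⟨conK.Quotient, inferInstance, ?_, ?_⟩
  · rintro ⟨p1, p2⟩ hne hsat hneq ψ
    simp only at hne hsat hneq ⊢
    set ψ' : FreeMonoid (Fin 4) →* FreeMonoid (Fin 4) :=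
      FreeMonoid.lift (fun i => (ψ (FreeMonoid.of i)).out) with hpsi
    have hlift : ψ = conK.mk'.comp ψ' := by
      apply FreeMonoid.hom_eq
      intro i
      simp only [MonoidHom.comp_apply, hpsi, FreeMonoid.lift_eval_of]
      exact (Quotient.out_eq _).symm
    have hinst : MSatisfies Hypo (ψ' p1) (ψ' p2) := fun θ => hsat (θ.comp ψ')
    obtain ⟨hcc, hbb⟩ := hypo_nec hinst
    have hR1 : ψ' p1 = wR1 ↔ ψ' p2 = wR1 := by
      constructor
      · intro h
        have h2 := classKey (ψ' p2).toList
          (fun x => by rw [← hcc x, h]; rfl)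
          (fun s t => by rw [← hbb s t, h]; rfl)
        rcases h2 with h2 | h2
        · exact ofL1 _ h2
        · exact absurd (starFM p1 p2 hsat ψ' h (ofL2 _ h2)) hneq
      · intro h
        have h2 := classKey (ψ' p1).toList
          (fun x => by rw [hcc x, h]; rfl)
          (fun s t => by rw [hbb s t, h]; rfl)
        rcases h2 with h2 | h2
        · exact ofL1 _ h2
        · exact absurd (starFM' p1 p2 hsat ψ' (ofL2 _ h2) h) hneq
    have hR2 : ψ' p1 = wR2 ↔ ψ' p2 = wR2 := by
      constructor
      · intro h
        have h2 := classKey2 (ψ' p2).toList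
          (fun x => by rw [← hcc x, h]; rfl)
          (fun s t => by rw [← hbb s t, h]; rfl)
        rcases h2 with h2 | h2
        · exact absurd (starFM' p1 p2 hsat ψ' h (ofL1 _ h2)) hneq
        · exact ofL2 _ h2
      · intro h
        have h2 := classKey2 (ψ' p1).toList
          (fun x => by rw [hcc x, h]; rfl)
          (fun s t => by rw [hbb s t, h]; rfl)
        rcases h2 with h2 | h2
        · exact absurd (starFM p1 p2 hsat ψ' (ofL1 _ h2) h) hneq
        · exact ofL2 _ h2
    have hK : conK (ψ' p1) (ψ' p2) := ⟨hcc, hbb, hR1, hR2⟩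
    rw [hlift]
    exact (Con.eq conK).2 hK
  · intro hms
    have h := hms conK.mk'
    have hK : conK wR1 wR2 := (Con.eq conK).1 h
    have h21 : wR2 = wR1 := (hK.2.2.1).1 rfl
    have : W2L = W1L := by
      rw [← toList_wR1, ← toList_wR2, h21]
    simp [W1L, W2L] at this
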